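/- Let n ≥ 1 be an integer, γ ≥ 1 a real number, and let f(z) = z + ∑_{k=n+1}^∞ a_k z^k be analytic on 𝔻. If ∑_{k=n+1}^∞ (k−1)·(k+γ−1)·|a_k| ≤ (n+γ)/2, then f ∈ Ω_n. -/

import Mathlib

open Complex Metric

/-- The open unit disc in `ℂ`. -/
def unitDisc : Set ℂ := Metric.ball 0 1

/-- `f ∈ 𝒜ₙ`: `f` is analytic on the unit disc with power series
`f(z) = z + ∑_{k=n+1}^∞ a_k z^k`. -/
def MemA (n : ℕ) (f : ℂ → ℂ) : Prop :=
  DifferentiableOn ℂ f unitDisc ∧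
    ∃ a : ℕ → ℂ, ∀ z ∈ unitDisc, f z = z + ∑' k : ℕ, a k * z ^ (n + 1 + k)

/-- `f ∈ Ωₙ`: `f ∈ 𝒜ₙ` and `|z f'(z) - f(z)| < 1/2` on the unit disc. -/
def MemOmega (n : ℕ) (f : ℂ → ℂ) : Prop :=
  MemA n f ∧ ∀ z ∈ unitDisc, ‖z * deriv f z - f z‖ < 1 / 2

theorem stmt_3 (n : ℕ) (hn : 1 ≤ n) (γ : ℝ) (hγ : 1 ≤ γ) (f : ℂ → ℂ) (a : ℕ → ℂ)
    (hf : DifferentiableOn ℂ f unitDisc)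
    (hrep : ∀ z ∈ unitDisc, f z = z + ∑' k : ℕ, a k * z ^ (n + 1 + k))
    (hsum : Summable fun k : ℕ => ((n : ℝ) + k) * (((n : ℝ) + k) + γ) * ‖a k‖)
    (hle : ∑' k : ℕ, ((n : ℝ) + k) * (((n : ℝ) + k) + γ) * ‖a k‖ ≤ ((n : ℝ) + γ) / 2) :
    MemOmega n f := by
  have hn1 : (1:ℝ) ≤ (n:ℝ) := by exact_mod_cast hn
  have hγ0 : (0:ℝ) < (n:ℝ) + γ := by linarith
  set u : ℕ → ℝ := fun k => ((n : ℝ) + k) * (((n : ℝ) + k) + γ) * ‖a k‖ with hu_def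
  have hk1 : ∀ k : ℕ, (1:ℝ) ≤ (n:ℝ) + k := fun k => by
    have : (0:ℝ) ≤ (k:ℝ) := Nat.cast_nonneg k
    linarith
  -- norm computation helpers
  have hnA : ∀ (k m : ℕ) (y : ℂ), ‖a k * (((n:ℂ) + 1 + (k:ℂ)) * y ^ m)‖
      = ((n:ℝ) + 1 + k) * ‖a k‖ * ‖y‖ ^ m := by
    intro k m y
    rw [show ((n:ℂ) + 1 + (k:ℂ)) = ((n + 1 + k : ℕ) : ℂ) by push_cast; ring]
    rw [norm_mul, norm_mul, norm_pow, Complex.norm_natCast]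
    push_cast; ring
  have hnB : ∀ (k m : ℕ) (y : ℂ), ‖a k * (((n:ℂ) + (k:ℂ)) * y ^ m)‖
      = ((n:ℝ) + k) * ‖a k‖ * ‖y‖ ^ m := by
    intro k m y
    rw [show ((n:ℂ) + (k:ℂ)) = ((n + k : ℕ) : ℂ) by push_cast; ring]
    rw [norm_mul, norm_mul, norm_pow, Complex.norm_natCast]
    push_cast; ring
  have hbig : ∀ k : ℕ, ((n:ℝ) + 1 + k) * ‖a k‖ ≤ u k := by
    intro k
    have h1 := hk1 k
    have hfac : (n:ℝ) + 1 + k ≤ ((n:ℝ) + k) * (((n:ℝ) + k) + γ) := by nlinarith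
    simpa [hu_def, mul_assoc] using
      mul_le_mul_of_nonneg_right hfac (norm_nonneg (a k))
  have hbig2 : ∀ k : ℕ, ((n:ℝ) + k) * ‖a k‖ ≤ u k := by
    intro k
    have h1 := hk1 k
    have hfac : (n:ℝ) + k ≤ ((n:ℝ) + k) * (((n:ℝ) + k) + γ) := by nlinarith
    simpa [hu_def, mul_assoc] using
      mul_le_mul_of_nonneg_right hfac (norm_nonneg (a k))
  have hbig3 : ∀ k : ℕ, ‖a k‖ ≤ u k := by
    intro k
    have h1 := hk1 k
    have hfac : (1:ℝ) ≤ ((n:ℝ) + k) * (((n:ℝ) + k) + γ) := by nlinarith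
    simpa [hu_def, mul_assoc] using
      mul_le_mul_of_nonneg_right hfac (norm_nonneg (a k))
  have hsum1 : Summable fun k : ℕ => ((n:ℝ) + 1 + k) * ‖a k‖ :=
    hsum.of_nonneg_of_le (fun k => by positivity) hbig
  have hsum2 : Summable fun k : ℕ => ((n:ℝ) + k) * ‖a k‖ :=
    hsum.of_nonneg_of_le (fun k => by positivity) hbig2
  have hS : ∑' k : ℕ, ((n:ℝ) + k) * ‖a k‖ ≤ 1 / 2 := by
    have h1 : ((n:ℝ) + γ) * ∑' k : ℕ, ((n:ℝ) + k) * ‖a k‖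
        = ∑' k : ℕ, ((n:ℝ) + γ) * (((n:ℝ) + k) * ‖a k‖) := (tsum_mul_left).symm
    have h2 : ∑' k : ℕ, ((n:ℝ) + γ) * (((n:ℝ) + k) * ‖a k‖) ≤ ∑' k : ℕ, u k := by
      refine Summable.tsum_le_tsum (fun k => ?_) (hsum2.mul_left _) hsum
      have h0 : (0:ℝ) ≤ ‖a k‖ := norm_nonneg _
      have h1 := hk1 k
      have hk0 : (0:ℝ) ≤ (k:ℝ) := Nat.cast_nonneg k
      simp only [hu_def]
      nlinarith [mul_nonneg (mul_nonneg (by linarith : (0:ℝ) ≤ (n:ℝ)+k) hk0) h0]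
    have h3 : ((n:ℝ) + γ) * ∑' k : ℕ, ((n:ℝ) + k) * ‖a k‖ ≤ ((n:ℝ) + γ) * (1/2) := by
      rw [h1]; calc _ ≤ ∑' k, u k := h2
        _ ≤ ((n:ℝ) + γ) / 2 := hle
        _ = ((n:ℝ) + γ) * (1/2) := by ring
    exact (mul_le_mul_iff_right₀ hγ0).mp h3
  have hderiv : ∀ z ∈ unitDisc,
      HasDerivAt f (1 + ∑' k : ℕ, a k * (((n:ℂ) + 1 + k) * z ^ (n + k))) z := by
    intro z hz
    have hts : HasDerivAt (fun y => ∑' k : ℕ, a k * y ^ (n + 1 + k))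
        (∑' k : ℕ, a k * (((n:ℂ) + 1 + k) * z ^ (n + k))) z := by
      refine hasDerivAt_tsum_of_isPreconnected hsum isOpen_ball
        ((convex_ball (0:ℂ) 1).isPreconnected) (g := fun k y => a k * y ^ (n + 1 + k))
        (g' := fun k y => a k * (((n:ℂ) + 1 + k) * y ^ (n + k)))
        (fun k y hy => ?_) (fun k y hy => ?_) (Metric.mem_ball_self one_pos) ?_ hz
      · have h := (hasDerivAt_pow (n + 1 + k) y).const_mul (a k)
        rw [show n + 1 + k - 1 = n + k from by omega] at h
        convert h using 1
        · rfl
        push_cast; ring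
      · have hy1 : ‖y‖ < 1 := by simpa using hy
        rw [hnA]
        have hpow : ‖y‖ ^ (n + k) ≤ 1 := pow_le_one₀ (norm_nonneg _) hy1.le
        calc ((n:ℝ) + 1 + k) * ‖a k‖ * ‖y‖ ^ (n + k)
            ≤ ((n:ℝ) + 1 + k) * ‖a k‖ * 1 := by
              gcongr
          _ = ((n:ℝ) + 1 + k) * ‖a k‖ := mul_one _
          _ ≤ u k := hbig k
      · have h0 : ∀ k : ℕ, a k * (0:ℂ) ^ (n + 1 + k) = 0 := fun k => by
          rw [zero_pow (by omega)]; ring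
        exact summable_zero.congr fun k => (h0 k).symm
    have hg : HasDerivAt (fun y => y + ∑' k : ℕ, a k * y ^ (n + 1 + k))
        (1 + ∑' k : ℕ, a k * (((n:ℂ) + 1 + k) * z ^ (n + k))) z :=
      (hasDerivAt_id z).add hts
    refine hg.congr_of_eventuallyEq ?_
    filter_upwards [isOpen_ball.mem_nhds hz] with y hy
    exact hrep y hy
  constructor
  · exact ⟨hf, a, hrep⟩
  intro z hz
  have hz1 : ‖z‖ < 1 := by simpa [unitDisc] using hz
  have hpow1 : ∀ m : ℕ, ‖z‖ ^ m ≤ 1 := fun m => pow_le_one₀ (norm_nonneg _) hz1.le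
  have hs1 : Summable fun k : ℕ => a k * z ^ (n + 1 + k) :=
    Summable.of_norm (hsum.of_nonneg_of_le (fun k => by positivity) (fun k => by
      rw [norm_mul, norm_pow]
      calc ‖a k‖ * ‖z‖ ^ (n + 1 + k) ≤ ‖a k‖ * 1 := by gcongr; exact hpow1 _
        _ = ‖a k‖ := mul_one _
        _ ≤ u k := hbig3 k))
  have hs2' : Summable fun k : ℕ => a k * (((n:ℂ) + 1 + k) * z ^ (n + 1 + k)) :=
    Summable.of_norm (hsum.of_nonneg_of_le (fun k => by positivity) (fun k => by
      rw [hnA]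
      calc ((n:ℝ) + 1 + k) * ‖a k‖ * ‖z‖ ^ (n + 1 + k)
          ≤ ((n:ℝ) + 1 + k) * ‖a k‖ * 1 := by gcongr; exact hpow1 _
        _ = ((n:ℝ) + 1 + k) * ‖a k‖ := mul_one _
        _ ≤ u k := hbig k))
  have hdf : deriv f z = 1 + ∑' k : ℕ, a k * (((n:ℂ) + 1 + k) * z ^ (n + k)) :=
    (hderiv z hz).deriv
  have hkey : z * deriv f z - f z = ∑' k : ℕ, a k * (((n:ℂ) + k) * z ^ (n + 1 + k)) := by
    rw [hdf, hrep z hz]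
    have hzmul : z * (1 + ∑' k : ℕ, a k * (((n:ℂ) + 1 + k) * z ^ (n + k)))
        = z + ∑' k : ℕ, a k * (((n:ℂ) + 1 + k) * z ^ (n + 1 + k)) := by
      rw [mul_add, mul_one, ← tsum_mul_left]
      congr 1
      refine tsum_congr fun k => ?_
      rw [show n + 1 + k = (n + k) + 1 from by omega, pow_succ]
      ring
    rw [hzmul]
    have heq : z + (∑' k : ℕ, a k * (((n:ℂ) + 1 + k) * z ^ (n + 1 + k)))
        - (z + ∑' k : ℕ, a k * z ^ (n + 1 + k))
        = (∑' k : ℕ, a k * (((n:ℂ) + 1 + k) * z ^ (n + 1 + k)))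
          - ∑' k : ℕ, a k * z ^ (n + 1 + k) := by ring
    rw [heq, ← Summable.tsum_sub hs2' hs1]
    refine tsum_congr fun k => ?_
    ring
  rw [hkey]
  have hnorm : ∀ k : ℕ, ‖a k * (((n:ℂ) + k) * z ^ (n + 1 + k))‖
      ≤ ((n:ℝ) + k) * ‖a k‖ * ‖z‖ ^ (n + 1) := by
    intro k
    rw [hnB]
    have hle2 : ‖z‖ ^ (n + 1 + k) ≤ ‖z‖ ^ (n + 1) := by
      rw [pow_add]
      calc ‖z‖ ^ (n+1) * ‖z‖ ^ k ≤ ‖z‖ ^ (n+1) * 1 := by gcongr; exact hpow1 _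
        _ = ‖z‖ ^ (n+1) := mul_one _
    exact mul_le_mul_of_nonneg_left hle2 (by positivity)
  have hsum3 : Summable fun k : ℕ => ((n:ℝ) + k) * ‖a k‖ * ‖z‖ ^ (n + 1) :=
    hsum2.mul_right _
  have hs3n : Summable fun k : ℕ => ‖a k * (((n:ℂ) + k) * z ^ (n + 1 + k))‖ :=
    hsum3.of_nonneg_of_le (fun k => norm_nonneg _) hnorm
  calc ‖∑' k : ℕ, a k * (((n:ℂ) + k) * z ^ (n + 1 + k))‖
      ≤ ∑' k : ℕ, ‖a k * (((n:ℂ) + k) * z ^ (n + 1 + k))‖ :=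
        norm_tsum_le_tsum_norm hs3n
    _ ≤ ∑' k : ℕ, ((n:ℝ) + k) * ‖a k‖ * ‖z‖ ^ (n + 1) :=
        Summable.tsum_le_tsum hnorm hs3n hsum3
    _ = (∑' k : ℕ, ((n:ℝ) + k) * ‖a k‖) * ‖z‖ ^ (n + 1) := tsum_mul_right
    _ ≤ (1/2) * ‖z‖ ^ (n + 1) :=
        mul_le_mul_of_nonneg_right hS (by positivity)
    _ < 1/2 := by
        have h1 : ‖z‖ ^ (n + 1) < 1 := pow_lt_one₀ (norm_nonneg _) hz1 (by omega)
        have h2 : (0:ℝ) ≤ ‖z‖ ^ (n + 1) := by positivity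
        nlinarith
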